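/- Let d ≥ 1, X = [0,1]^d, and let f : X → ℝ be continuous with ‖f‖_∞ ≤ log(3/2) and L_f = 0. Define f̃ : X → ℝ by f̃(x) := log(2·exp(f(x)) − 1). Then Z_{f̃} = 1 and P_f = (1/2)·P_{f̃} + (1/2)·U, where U is the uniform distribution (Lebesgue measure) on X; that is, the two-component mixture of the Gibbs measure of f̃ and the uniform distribution with equal weights reproduces P_f exactly. -/

import Mathlib

open MeasureTheory Real

noncomputable section

/-- The unit cube `[0,1]^d` in `ℝ^d`. -/
def cube (d : ℕ) : Set (Fin d → ℝ) := Set.Icc 0 1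

/-- The partition function `Z_f = ∫_X exp(f(x)) dx`. -/
def partZ {d : ℕ} (f : (Fin d → ℝ) → ℝ) : ℝ := ∫ x in cube d, Real.exp (f x)

/-- The log-partition function `L_f = log Z_f`. -/
def logPart {d : ℕ} (f : (Fin d → ℝ) → ℝ) : ℝ := Real.log (partZ f)

/-- The Gibbs measure `P_f` with density `exp(f(x))/Z_f` w.r.t. Lebesgue measure on the cube. -/
def gibbs {d : ℕ} (f : (Fin d → ℝ) → ℝ) : Measure (Fin d → ℝ) :=
  (volume.restrict (cube d)).withDensity fun x => ENNReal.ofReal (Real.exp (f x) / partZ f)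

/-- Essential supremum norm `‖h‖_∞` over the cube. -/
def supNormOn {d : ℕ} (h : (Fin d → ℝ) → ℝ) : ℝ :=
  essSup (fun x => |h x|) (volume.restrict (cube d))

/-- Total variation distance between two measures: `sup_A |P(A) − Q(A)|`. -/
def DTV {α : Type*} [MeasurableSpace α] (P Q : Measure α) : ℝ :=
  ⨆ A : {A : Set α // MeasurableSet A}, |(P A.1).toReal - (Q A.1).toReal|

/-- `f` is bounded on the cube. -/
def BddOnCube {d : ℕ} (f : (Fin d → ℝ) → ℝ) : Prop := ∃ C, ∀ x ∈ cube d, |f x| ≤ C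

/-- Proposition 2.13, exact sampling construction.
For continuous `f` on `X = [0,1]^d` with `‖f‖_∞ ≤ log(3/2)` and `L_f = 0`, the function
`f̃(x) := log(2 e^{f(x)} − 1)` satisfies `Z_{f̃} = 1` and
`P_f = (1/2) P_{f̃} + (1/2) U` with `U` the uniform distribution on `X`. -/
theorem exact_sampling_mixture (d : ℕ) (hd : 1 ≤ d) (f : (Fin d → ℝ) → ℝ)
    (hcont : ContinuousOn f (cube d))
    (hbdd : ∀ x ∈ cube d, |f x| ≤ Real.log (3 / 2))
    (hL : logPart f = 0) :
    partZ (fun x => Real.log (2 * Real.exp (f x) - 1)) = 1 ∧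
    gibbs f = (2⁻¹ : ENNReal) • gibbs (fun x => Real.log (2 * Real.exp (f x) - 1))
        + (2⁻¹ : ENNReal) • volume.restrict (cube d) := by

  -- abbreviations
  set μ := volume.restrict (cube d) with hμ
  have hcube : MeasurableSet (cube d) := measurableSet_Icc
  have hcompact : IsCompact (cube d) := isCompact_Icc
  have hvol : volume (cube d) = 1 := by
    rw [cube, Real.volume_Icc_pi]
    simp
  -- pointwise bounds on the cube
  have hlow : ∀ x ∈ cube d, (2/3 : ℝ) ≤ Real.exp (f x) := by
    intro x hx
    have h1 : -Real.log (3/2) ≤ f x := (abs_le.mp (hbdd x hx)).1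
    have h2 : Real.log (2/3) = -Real.log (3/2) := by
      rw [show (2/3 : ℝ) = (3/2 : ℝ)⁻¹ by norm_num, Real.log_inv]
    calc (2/3 : ℝ) = Real.exp (Real.log (2/3)) := (Real.exp_log (by norm_num)).symm
      _ ≤ Real.exp (f x) := Real.exp_le_exp.mpr (by rw [h2]; exact h1)
  have hpos : ∀ x ∈ cube d, (0 : ℝ) < 2 * Real.exp (f x) - 1 := by
    intro x hx
    have := hlow x hx
    nlinarith
  -- integrability
  have hint : IntegrableOn (fun x => Real.exp (f x)) (cube d) :=
    (Real.continuous_exp.comp_continuousOn hcont).integrableOn_compact hcompact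
  -- Z_f = 1
  have hZpos : (0 : ℝ) < partZ f := by
    have hmono : ∫ x in cube d, (2/3 : ℝ) ≤ ∫ x in cube d, Real.exp (f x) :=
      setIntegral_mono_on (integrableOn_const (by rw [hvol]; exact ENNReal.one_ne_top))
        hint hcube hlow
    have hconst : ∫ x in cube d, (2/3 : ℝ) = 2/3 := by
      rw [setIntegral_const, measureReal_def, hvol]; simp
    rw [partZ]
    linarith [hconst ▸ hmono]
  have hZ : partZ f = 1 := by
    have := Real.exp_log hZpos
    rw [← logPart, hL, Real.exp_zero] at this
    exact this.symm
  -- exp (f̃ x) = 2 exp (f x) - 1 on the cube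
  have hexp_tilde : ∀ x ∈ cube d,
      Real.exp (Real.log (2 * Real.exp (f x) - 1)) = 2 * Real.exp (f x) - 1 := fun x hx =>
    Real.exp_log (hpos x hx)
  -- Z_{f̃} = 1
  have hZt : partZ (fun x => Real.log (2 * Real.exp (f x) - 1)) = 1 := by
    rw [partZ]
    rw [setIntegral_congr_fun hcube (fun x hx => hexp_tilde x hx)]
    rw [integral_sub (hint.const_mul 2) (integrableOn_const (by rw [hvol]; exact ENNReal.one_ne_top))]
    rw [MeasureTheory.integral_const_mul, setIntegral_const, measureReal_def, hvol]
    have h1 : ∫ x in cube d, Real.exp (f x) = 1 := hZ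
    rw [h1]
    norm_num
  refine ⟨hZt, ?_⟩
  -- measure equality
  have hfm : AEMeasurable f μ := hcont.aemeasurable hcube
  set g : (Fin d → ℝ) → ENNReal :=
    fun x => ENNReal.ofReal (Real.exp (Real.log (2 * Real.exp (f x) - 1)) / 1) with hg
  have hgm : AEMeasurable g μ := by
    apply ENNReal.measurable_ofReal.comp_aemeasurable
    apply AEMeasurable.div_const
    exact Real.measurable_exp.comp_aemeasurable (Real.measurable_log.comp_aemeasurable
      (((Real.measurable_exp.comp_aemeasurable hfm).const_mul 2).sub aemeasurable_const))
  rw [gibbs, gibbs, hZ, hZt, ← hμ, ← hg]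
  -- replace g by its measurable mk
  rw [withDensity_congr_ae hgm.ae_eq_mk]
  rw [← withDensity_smul _ hgm.measurable_mk, ← withDensity_const (μ := μ) 2⁻¹,
    ← withDensity_add_left (hgm.measurable_mk.const_smul (2⁻¹ : ENNReal))]
  apply withDensity_congr_ae
  filter_upwards [ae_restrict_mem hcube, hgm.ae_eq_mk] with x hx hmk
  simp only [Pi.add_apply, Pi.smul_apply, smul_eq_mul]
  rw [← hmk, hg]
  simp only [div_one]
  rw [hexp_tilde x hx]
  have h12 : (2⁻¹ : ENNReal) = ENNReal.ofReal (2⁻¹ : ℝ) := by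
    rw [ENNReal.ofReal_inv_of_pos (by norm_num), ENNReal.ofReal_ofNat]
  have hnn : (0 : ℝ) ≤ 2 * Real.exp (f x) - 1 := (hpos x hx).le
  rw [h12, ← ENNReal.ofReal_mul (by norm_num), ← ENNReal.ofReal_add (by positivity) (by norm_num)]
  congr 1
  ring
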